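/- With the lifting setup below for both C and D, suppose C and D are homotopy equivalent via chain maps ψ : C → D and ζ : D → C with ψ∘ζ homotopic to id_D and ζ∘ψ homotopic to id_C. Then for each k, the Eisenbud operator t_k of C is homotopic to ζ∘s_k∘ψ and the Eisenbud operator s_k of D is homotopic to ψ∘t_k∘ζ; explicitly, there exist R-linear maps λ_n : C_n → C_{n−1} with t_{k,n} − ζ_{n−2}∘s_{k,n}∘ψ_n = d^C_{n−1}∘λ_n + λ_{n−1}∘d^C_n, and R-linear maps μ_n : D_n → D_{n−1} with s_{k,n} − ψ_{n−2}∘t_{k,n}∘ζ_n = d^D_{n−1}∘μ_n + μ_{n−1}∘d^D_n. -/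

import Mathlib

/-!
Statement 6: if `C` and `D` (complexes over `R = Q/(f₁,…,f_c)` admitting lifts) are
homotopy equivalent via `ψ : C → D` and `ζ : D → C`, then the Eisenbud operator `t_k`
of `C` is homotopic to `ζ ∘ s_k ∘ ψ`, and `s_k` is homotopic to `ψ ∘ t_k ∘ ζ`.
-/

open TensorProduct

/-- The quotient ring `R = Q/(f₁,…,f_c)`. -/
abbrev Rquot (Q : Type) [CommRing Q] {c : ℕ} (f : Fin c → Q) : Type :=
  Q ⧸ Ideal.span (Set.range f)

section EisenbudAux

open RingTheory.Sequence

variable {Q : Type} [CommRing Q] {c : ℕ} {f : Fin c → Q}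

private lemma rq_one_tmul_surj {M : Type} [AddCommGroup M] [Module Q M]
    (y : Rquot Q f ⊗[Q] M) : ∃ m : M, (1 : Rquot Q f) ⊗ₜ[Q] m = y := by
  induction y using TensorProduct.induction_on with
  | zero => exact ⟨0, by simp⟩
  | tmul r m =>
    obtain ⟨q, rfl⟩ := Ideal.Quotient.mk_surjective r
    refine ⟨q • m, ?_⟩
    rw [tmul_smul, smul_tmul']
    rw [← Algebra.algebraMap_eq_smul_one, Ideal.Quotient.algebraMap_eq]
  | add x y hx hy =>
    obtain ⟨m, hm⟩ := hx; obtain ⟨m', hm'⟩ := hy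
    exact ⟨m + m', by rw [tmul_add, hm, hm']⟩

private lemma rq_exists_lift {M N : Type} [AddCommGroup M] [Module Q M]
    [AddCommGroup N] [Module Q N] (hM : Module.Free Q M)
    (g : (Rquot Q f ⊗[Q] M) →ₗ[Rquot Q f] (Rquot Q f ⊗[Q] N)) :
    ∃ T : M →ₗ[Q] N, T.baseChange (Rquot Q f) = g := by
  let b := hM.chooseBasis
  choose v hv using fun i => rq_one_tmul_surj (f := f) (g ((1 : Rquot Q f) ⊗ₜ[Q] b i))
  refine ⟨b.constr Q v, (b.baseChange (Rquot Q f)).ext fun i => ?_⟩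
  rw [Module.Basis.baseChange_apply, LinearMap.baseChange_tmul, Module.Basis.constr_basis, hv]

private lemma rq_mem_of_tmul_zero {N : Type} [AddCommGroup N] [Module Q N] (n : N)
    (h : (1 : Rquot Q f) ⊗ₜ[Q] n = 0) :
    n ∈ (Ideal.span (Set.range f)) • (⊤ : Submodule Q N) := by
  set I := Ideal.span (Set.range f) with hI
  set mk2 : N →ₗ[Q] N ⧸ (I • (⊤ : Submodule Q N)) := (I • (⊤ : Submodule Q N)).mkQ with hmk2
  have hker : I ≤ LinearMap.ker
      (LinearMap.toSpanSingleton Q (N →ₗ[Q] N ⧸ (I • (⊤ : Submodule Q N))) mk2) := by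
    intro q hq
    rw [LinearMap.mem_ker]
    ext m
    simp only [LinearMap.toSpanSingleton_apply, LinearMap.smul_apply, LinearMap.zero_apply,
      ← map_smul]
    exact (Submodule.Quotient.mk_eq_zero _).2 (Submodule.smul_mem_smul hq Submodule.mem_top)
  let φ : Rquot Q f →ₗ[Q] (N →ₗ[Q] N ⧸ (I • (⊤ : Submodule Q N))) :=
    Submodule.liftQ I (LinearMap.toSpanSingleton Q _ mk2) hker
  let g := TensorProduct.lift φ
  have hg : g ((1 : Rquot Q f) ⊗ₜ[Q] n) = mk2 n := by
    have h1 : (1 : Rquot Q f) = Submodule.Quotient.mk (1 : Q) := rfl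
    rw [h1]
    show φ (Submodule.Quotient.mk (1 : Q)) n = mk2 n
    rw [Submodule.liftQ_apply, LinearMap.toSpanSingleton_apply, one_smul]
  rw [h, map_zero] at hg
  exact (Submodule.Quotient.mk_eq_zero _).1 hg.symm

private lemma rq_exists_sum_rep {N : Type} [AddCommGroup N] [Module Q N] (n : N)
    (h : n ∈ (Ideal.span (Set.range f)) • (⊤ : Submodule Q N)) :
    ∃ v : Fin c → N, n = ∑ k, f k • v k := by
  refine Submodule.smul_induction_on h ?_ ?_
  · intro r hr m _
    obtain ⟨u, hu⟩ := (Submodule.mem_span_range_iff_exists_fun Q).1 hr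
    exact ⟨fun k => u k • m, by rw [← hu, Finset.sum_smul]; simp [smul_smul, mul_comm]⟩
  · rintro x y ⟨v, hv⟩ ⟨w, hw⟩
    exact ⟨v + w, by simp [hv, hw, smul_add, Finset.sum_add_distrib]⟩

private lemma rq_map_decomp {M N : Type} [AddCommGroup M] [Module Q M]
    [AddCommGroup N] [Module Q N] (hM : Module.Free Q M) (T : M →ₗ[Q] N)
    (h : T.baseChange (Rquot Q f) = 0) :
    ∃ σ : Fin c → (M →ₗ[Q] N), T = ∑ k, f k • σ k := by
  let b := hM.chooseBasis
  have hi : ∀ i, T (b i) ∈ (Ideal.span (Set.range f)) • (⊤ : Submodule Q N) := by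
    intro i
    refine rq_mem_of_tmul_zero _ ?_
    have := LinearMap.congr_fun h ((1 : Rquot Q f) ⊗ₜ[Q] b i)
    rwa [LinearMap.baseChange_tmul, LinearMap.zero_apply] at this
  choose v hv using fun i => rq_exists_sum_rep (f := f) _ (hi i)
  refine ⟨fun k => b.constr Q (fun i => v i k), b.ext fun i => ?_⟩
  rw [hv i]
  simp [LinearMap.sum_apply, Module.Basis.constr_basis]

private lemma rq_ofList_ofFn_eq (f : Fin c → Q) :
    Ideal.ofList (List.ofFn f) = Ideal.span (Set.range f) := by
  unfold Ideal.ofList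
  congr 1
  ext x
  simp [List.mem_ofFn]

private lemma rq_koszul_ring {Q : Type} [CommRing Q] :
    ∀ (c : ℕ) (f : Fin c → Q), IsWeaklyRegular Q (List.ofFn f) →
      ∀ a : Fin c → Q, (∑ k, f k * a k) = 0 → ∀ k, a k ∈ Ideal.span (Set.range f) := by
  intro c
  induction c with
  | zero => exact fun f _ a _ k => k.elim0
  | succ c ih =>
    intro f hreg a ha
    set g : Fin c → Q := fun i => f i.castSucc with hg
    have hofn : List.ofFn f = List.ofFn g ++ [f (Fin.last c)] := by
      rw [List.ofFn_succ', List.concat_eq_append]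
    have htake : (List.ofFn f).take c = List.ofFn g := by
      rw [hofn, List.take_append_of_le_length (by simp), List.take_of_length_le (by simp)]
    have hpre : IsWeaklyRegular Q (List.ofFn g) := by
      rw [isWeaklyRegular_iff]
      intro i hi
      have hi' : i < (List.ofFn f).length := by simp at hi ⊢; omega
      have := (isWeaklyRegular_iff _ _).1 hreg i hi'
      have htakei : (List.ofFn f).take i = (List.ofFn g).take i := by
        rw [hofn, List.take_append_of_le_length (by simp at hi ⊢; omega)]
      rw [htakei] at this
      have hget : (List.ofFn f)[i]'hi' = (List.ofFn g)[i]'hi := by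
        rw [List.getElem_ofFn, List.getElem_ofFn]
        simp [hg]
      rwa [hget] at this
    have hlast : IsSMulRegular (Q ⧸ (Ideal.span (Set.range g) • (⊤ : Submodule Q Q)))
        (f (Fin.last c)) := by
      have hc : c < (List.ofFn f).length := by simp
      have := (isWeaklyRegular_iff _ _).1 hreg c hc
      rw [htake, rq_ofList_ofFn_eq] at this
      have hget : (List.ofFn f)[c]'hc = f (Fin.last c) := by
        rw [List.getElem_ofFn]
        rfl
      rwa [hget] at this
    have hsum : ∑ i : Fin c, g i * a i.castSucc + f (Fin.last c) * a (Fin.last c) = 0 := by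
      rw [← ha, Fin.sum_univ_castSucc]
    set J := Ideal.span (Set.range g) with hJ
    have hJf : J ≤ Ideal.span (Set.range f) := by
      apply Ideal.span_mono
      rintro x ⟨i, rfl⟩; exact ⟨i.castSucc, rfl⟩
    have hmem : f (Fin.last c) * a (Fin.last c) ∈ J := by
      have he : f (Fin.last c) * a (Fin.last c) = - ∑ i : Fin c, g i * a i.castSucc :=
        eq_neg_of_add_eq_zero_right hsum
      rw [he]
      exact neg_mem (Ideal.sum_mem _ fun i _ =>
        Ideal.mul_mem_right _ _ (Ideal.subset_span ⟨i, rfl⟩))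
    have hJtop : (J • (⊤ : Submodule Q Q)) = J := by
      rw [Ideal.smul_eq_mul, Ideal.mul_top]
    have halast : a (Fin.last c) ∈ J := by
      have h0 : f (Fin.last c) • Submodule.Quotient.mk (p := J • (⊤ : Submodule Q Q))
          (a (Fin.last c)) = f (Fin.last c) • (0 : Q ⧸ (J • (⊤ : Submodule Q Q))) := by
        rw [smul_zero, ← Submodule.Quotient.mk_smul, Submodule.Quotient.mk_eq_zero,
          hJtop, smul_eq_mul]
        exact hmem
      have h1 := hlast h0
      rw [Submodule.Quotient.mk_eq_zero, hJtop] at h1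
      exact h1
    obtain ⟨u, hu⟩ := (Submodule.mem_span_range_iff_exists_fun Q).1 halast
    set b : Fin c → Q := fun i => a i.castSucc + f (Fin.last c) * u i with hb
    have hbsum : ∑ i, g i * b i = 0 := by
      have he : ∑ i, g i * b i
          = ∑ i : Fin c, g i * a i.castSucc + f (Fin.last c) * ∑ i, u i • g i := by
        rw [Finset.mul_sum, ← Finset.sum_add_distrib]
        apply Finset.sum_congr rfl; intro x _; simp only [hb, smul_eq_mul]; ring
      rw [he, hu]
      exact hsum
    have hbmem := ih g hpre b hbsum
    intro k
    refine Fin.lastCases ?_ ?_ k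
    · exact hJf halast
    · intro i
      have he : a i.castSucc = b i - f (Fin.last c) * u i := by rw [hb]; ring
      rw [he]
      exact sub_mem (hJf (hbmem i))
        (Ideal.mul_mem_right _ _ (Ideal.subset_span ⟨Fin.last c, rfl⟩))

private lemma rq_koszul_free {H : Type} [AddCommGroup H] [Module Q H]
    (hH : Module.Free Q H)
    (hreg : IsWeaklyRegular Q (List.ofFn f)) (A : Fin c → H)
    (hA : ∑ k, f k • A k = 0) (k : Fin c) :
    A k ∈ (Ideal.span (Set.range f)) • (⊤ : Submodule Q H) := by
  let b := hH.chooseBasis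
  have hcoord : ∀ i, (b.repr (A k)) i ∈ Ideal.span (Set.range f) := by
    intro i
    refine rq_koszul_ring c f hreg (fun j => (b.repr (A j)) i) ?_ k
    have := congrArg (fun x => (b.repr x) i) hA
    simpa [map_sum, smul_eq_mul, mul_comm] using this
  have := b.linearCombination_repr (A k)
  rw [← this, Finsupp.linearCombination_apply, Finsupp.sum]
  exact Submodule.sum_mem _ fun i _ => Submodule.smul_mem_smul (hcoord i) Submodule.mem_top

private lemma rq_baseChange_zero_of_mem {M N : Type} [AddCommGroup M] [Module Q M]
    [AddCommGroup N] [Module Q N] (T : M →ₗ[Q] N)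
    (h : T ∈ (Ideal.span (Set.range f)) • (⊤ : Submodule Q (M →ₗ[Q] N))) :
    T.baseChange (Rquot Q f) = 0 := by
  obtain ⟨B, hB⟩ := rq_exists_sum_rep T h
  have hz : ∀ j : Fin c, ((f j • B j).baseChange (Rquot Q f)) = 0 := by
    intro j
    rw [LinearMap.baseChange_smul]
    have he : (f j : Q) • (B j).baseChange (Rquot Q f)
        = (algebraMap Q (Rquot Q f) (f j)) • (B j).baseChange (Rquot Q f) := by
      rw [algebraMap_smul]
    rw [he, Ideal.Quotient.algebraMap_eq, Ideal.Quotient.eq_zero_iff_mem.2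
      (Ideal.subset_span (Set.mem_range_self j)), zero_smul]
  rw [hB, show ((∑ k, f k • B k).baseChange (Rquot Q f))
      = ∑ k, ((f k • B k).baseChange (Rquot Q f)) from
    map_sum (LinearMap.baseChangeHom Q (Rquot Q f) M N) _ _]
  simp [hz]

private lemma rq_koszul_baseChange {M N : Type} [AddCommGroup M] [Module Q M]
    [AddCommGroup N] [Module Q N]
    (hM : Module.Free Q M) (hMfin : Module.Finite Q M) (hN : Module.Free Q N)
    (hreg : IsWeaklyRegular Q (List.ofFn f)) (A : Fin c → (M →ₗ[Q] N))
    (hA : ∑ k, f k • A k = 0) (k : Fin c) :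
    (A k).baseChange (Rquot Q f) = 0 := by
  haveI := hM; haveI := hMfin; haveI := hN
  exact rq_baseChange_zero_of_mem _
    (rq_koszul_free (Module.Free.linearMap Q Q M N) hreg A hA k)

end EisenbudAux

set_option maxHeartbeats 3000000 in
set_option synthInstance.maxHeartbeats 1000000 in
/-- Eisenbud operators of homotopy equivalent complexes correspond
under the homotopy equivalence, up to homotopy. -/
theorem eisenbud_operators_of_homotopy_equivalence
    (Q : Type) [CommRing Q] (c : ℕ) (f : Fin c → Q)
    (hreg : RingTheory.Sequence.IsRegular Q (List.ofFn f))
    (Ct Dt : ℤ → Type)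
    [∀ n, AddCommGroup (Ct n)] [∀ n, Module Q (Ct n)]
    [∀ n, AddCommGroup (Dt n)] [∀ n, Module Q (Dt n)]
    (hCfree : ∀ n, Module.Free Q (Ct n)) (hCfin : ∀ n, Module.Finite Q (Ct n))
    (hDfree : ∀ n, Module.Free Q (Dt n)) (hDfin : ∀ n, Module.Finite Q (Dt n))
    (dtC : ∀ n : ℤ, Ct (n + 1) →ₗ[Q] Ct n)
    (dtD : ∀ n : ℤ, Dt (n + 1) →ₗ[Q] Dt n)
    (ttC : Fin c → ∀ n : ℤ, Ct (n + 1 + 1) →ₗ[Q] Ct n)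
    (ttD : Fin c → ∀ n : ℤ, Dt (n + 1 + 1) →ₗ[Q] Dt n)
    (hddC : ∀ (n : ℤ) (x : Ct (n + 1 + 1)),
      dtC n (dtC (n + 1) x) = ∑ k, f k • ttC k n x)
    (hddD : ∀ (n : ℤ) (x : Dt (n + 1 + 1)),
      dtD n (dtD (n + 1) x) = ∑ k, f k • ttD k n x)
    -- the chain maps `ψ : C → D` and `ζ : D → C`
    (ψ : ∀ n : ℤ, (Rquot Q f ⊗[Q] Ct n) →ₗ[Rquot Q f] (Rquot Q f ⊗[Q] Dt n))
    (ζ : ∀ n : ℤ, (Rquot Q f ⊗[Q] Dt n) →ₗ[Rquot Q f] (Rquot Q f ⊗[Q] Ct n))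
    (hψ : ∀ (n : ℤ) (x : Rquot Q f ⊗[Q] Ct (n + 1)),
      ψ n ((dtC n).baseChange (Rquot Q f) x) =
        (dtD n).baseChange (Rquot Q f) (ψ (n + 1) x))
    (hζ : ∀ (n : ℤ) (x : Rquot Q f ⊗[Q] Dt (n + 1)),
      ζ n ((dtD n).baseChange (Rquot Q f) x) =
        (dtC n).baseChange (Rquot Q f) (ζ (n + 1) x))
    -- `ψ ∘ ζ` is homotopic to the identity of `D`
    (hψζ : ∃ h : ∀ n : ℤ, (Rquot Q f ⊗[Q] Dt n) →ₗ[Rquot Q f] (Rquot Q f ⊗[Q] Dt (n + 1)),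
      ∀ (n : ℤ) (x : Rquot Q f ⊗[Q] Dt (n + 1)),
        ψ (n + 1) (ζ (n + 1) x) - x =
          (dtD (n + 1)).baseChange (Rquot Q f) (h (n + 1) x) +
            h n ((dtD n).baseChange (Rquot Q f) x))
    -- `ζ ∘ ψ` is homotopic to the identity of `C`
    (hζψ : ∃ h : ∀ n : ℤ, (Rquot Q f ⊗[Q] Ct n) →ₗ[Rquot Q f] (Rquot Q f ⊗[Q] Ct (n + 1)),
      ∀ (n : ℤ) (x : Rquot Q f ⊗[Q] Ct (n + 1)),
        ζ (n + 1) (ψ (n + 1) x) - x =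
          (dtC (n + 1)).baseChange (Rquot Q f) (h (n + 1) x) +
            h n ((dtC n).baseChange (Rquot Q f) x)) :
    ∀ k : Fin c,
      (∃ lam : ∀ n : ℤ, (Rquot Q f ⊗[Q] Ct (n + 1)) →ₗ[Rquot Q f] (Rquot Q f ⊗[Q] Ct n),
        ∀ (n : ℤ) (x : Rquot Q f ⊗[Q] Ct (n + 1 + 1)),
          (ttC k n).baseChange (Rquot Q f) x -
              ζ n ((ttD k n).baseChange (Rquot Q f) (ψ (n + 1 + 1) x)) =
            (dtC n).baseChange (Rquot Q f) (lam (n + 1) x) +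
              lam n ((dtC (n + 1)).baseChange (Rquot Q f) x)) ∧
      (∃ mu : ∀ n : ℤ, (Rquot Q f ⊗[Q] Dt (n + 1)) →ₗ[Rquot Q f] (Rquot Q f ⊗[Q] Dt n),
        ∀ (n : ℤ) (x : Rquot Q f ⊗[Q] Dt (n + 1 + 1)),
          (ttD k n).baseChange (Rquot Q f) x -
              ψ n ((ttC k n).baseChange (Rquot Q f) (ζ (n + 1 + 1) x)) =
            (dtD n).baseChange (Rquot Q f) (mu (n + 1) x) +
              mu n ((dtD (n + 1)).baseChange (Rquot Q f) x)) := by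
  intro k
  obtain ⟨G, hG⟩ := hζψ
  obtain ⟨H, hH⟩ := hψζ
  have hwreg : RingTheory.Sequence.IsWeaklyRegular Q (List.ofFn f) := hreg.toIsWeaklyRegular
  -- lifts of ψ and ζ over Q
  choose ψt hψt using fun n : ℤ => rq_exists_lift (hCfree n) (ψ n)
  choose ζt hζt using fun n : ℤ => rq_exists_lift (hDfree n) (ζ n)
  -- error terms for the lifted chain maps
  have hEψ : ∀ n : ℤ, ((dtD n ∘ₗ ψt (n + 1) - ψt n ∘ₗ dtC n).baseChange (Rquot Q f)) = 0 := by
    intro n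
    rw [LinearMap.baseChange_sub, LinearMap.baseChange_comp, LinearMap.baseChange_comp,
      hψt, hψt]
    refine LinearMap.ext fun x => ?_
    rw [LinearMap.sub_apply, LinearMap.comp_apply, LinearMap.comp_apply, LinearMap.zero_apply,
      sub_eq_zero]
    exact (hψ n x).symm
  have hEζ : ∀ n : ℤ, ((dtC n ∘ₗ ζt (n + 1) - ζt n ∘ₗ dtD n).baseChange (Rquot Q f)) = 0 := by
    intro n
    rw [LinearMap.baseChange_sub, LinearMap.baseChange_comp, LinearMap.baseChange_comp,
      hζt, hζt]
    refine LinearMap.ext fun x => ?_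
    rw [LinearMap.sub_apply, LinearMap.comp_apply, LinearMap.comp_apply, LinearMap.zero_apply,
      sub_eq_zero]
    exact (hζ n x).symm
  choose σ hσ using fun n : ℤ => rq_map_decomp (hCfree (n + 1)) _ (hEψ n)
  choose τ hτ using fun n : ℤ => rq_map_decomp (hDfree (n + 1)) _ (hEζ n)
  have hσ' : ∀ (n : ℤ) (x : Ct (n + 1)),
      dtD n (ψt (n + 1) x) - ψt n (dtC n x) = ∑ j, f j • σ n j x := by
    intro n x
    have := LinearMap.congr_fun (hσ n) x
    simpa [LinearMap.sum_apply] using this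
  have hτ' : ∀ (n : ℤ) (x : Dt (n + 1)),
      dtC n (ζt (n + 1) x) - ζt n (dtD n x) = ∑ j, f j • τ n j x := by
    intro n x
    have := LinearMap.congr_fun (hτ n) x
    simpa [LinearMap.sum_apply] using this
  -- the Eisenbud operators commute with the differentials after reduction
  have hR1C : ∀ (n : ℤ) (y : Rquot Q f ⊗[Q] Ct (n + 1 + 1 + 1)),
      (ttC k n).baseChange (Rquot Q f) ((dtC (n + 1 + 1)).baseChange (Rquot Q f) y)
        = (dtC n).baseChange (Rquot Q f) ((ttC k (n + 1)).baseChange (Rquot Q f) y) := by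
    intro n y
    have hz : ∑ j, f j • (ttC j n ∘ₗ dtC (n + 1 + 1) - dtC n ∘ₗ ttC j (n + 1)) = 0 := by
      ext x
      simp only [LinearMap.sum_apply, LinearMap.smul_apply, LinearMap.sub_apply,
        LinearMap.comp_apply, LinearMap.zero_apply, smul_sub, Finset.sum_sub_distrib]
      rw [← hddC n (dtC (n + 1 + 1) x),
        show ∑ j, f j • (dtC n) ((ttC j (n + 1)) x) = dtC n (∑ j, f j • ttC j (n + 1) x) from
          by rw [map_sum]; simp only [map_smul],
        ← hddC (n + 1) x, sub_self]
    have hbc := rq_koszul_baseChange (hCfree (n + 1 + 1 + 1)) (hCfin (n + 1 + 1 + 1))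
      (hCfree n) hwreg _ hz k
    have h5 := LinearMap.congr_fun hbc y
    rw [LinearMap.baseChange_sub, LinearMap.baseChange_comp, LinearMap.baseChange_comp] at h5
    simpa [LinearMap.sub_apply, LinearMap.comp_apply, sub_eq_zero] using h5
  have hR1D : ∀ (n : ℤ) (y : Rquot Q f ⊗[Q] Dt (n + 1 + 1 + 1)),
      (ttD k n).baseChange (Rquot Q f) ((dtD (n + 1 + 1)).baseChange (Rquot Q f) y)
        = (dtD n).baseChange (Rquot Q f) ((ttD k (n + 1)).baseChange (Rquot Q f) y) := by
    intro n y
    have hz : ∑ j, f j • (ttD j n ∘ₗ dtD (n + 1 + 1) - dtD n ∘ₗ ttD j (n + 1)) = 0 := by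
      ext x
      simp only [LinearMap.sum_apply, LinearMap.smul_apply, LinearMap.sub_apply,
        LinearMap.comp_apply, LinearMap.zero_apply, smul_sub, Finset.sum_sub_distrib]
      rw [← hddD n (dtD (n + 1 + 1) x),
        show ∑ j, f j • (dtD n) ((ttD j (n + 1)) x) = dtD n (∑ j, f j • ttD j (n + 1) x) from
          by rw [map_sum]; simp only [map_smul],
        ← hddD (n + 1) x, sub_self]
    have hbc := rq_koszul_baseChange (hDfree (n + 1 + 1 + 1)) (hDfin (n + 1 + 1 + 1))
      (hDfree n) hwreg _ hz k
    have h5 := LinearMap.congr_fun hbc y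
    rw [LinearMap.baseChange_sub, LinearMap.baseChange_comp, LinearMap.baseChange_comp] at h5
    simpa [LinearMap.sub_apply, LinearMap.comp_apply, sub_eq_zero] using h5
  -- `t_k ∘ ζ` is homotopic to `ζ ∘ s_k` (with explicit homotopy `τ`)
  have hR2ζ : ∀ (n : ℤ) (y : Rquot Q f ⊗[Q] Dt (n + 1 + 1)),
      (ttC k n).baseChange (Rquot Q f) (ζ (n + 1 + 1) y)
          - ζ n ((ttD k n).baseChange (Rquot Q f) y)
        = (dtC n).baseChange (Rquot Q f) ((τ (n + 1) k).baseChange (Rquot Q f) y)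
          + (τ n k).baseChange (Rquot Q f) ((dtD (n + 1)).baseChange (Rquot Q f) y) := by
    intro n y
    have hz : ∑ j, f j • (ttC j n ∘ₗ ζt (n + 1 + 1) - ζt n ∘ₗ ttD j n
        - τ n j ∘ₗ dtD (n + 1) - dtC n ∘ₗ τ (n + 1) j) = 0 := by
      ext x
      simp only [LinearMap.sum_apply, LinearMap.smul_apply, LinearMap.sub_apply,
        LinearMap.comp_apply, LinearMap.zero_apply, smul_sub, Finset.sum_sub_distrib]
      have e1 : ∑ j, f j • ttC j n (ζt (n + 1 + 1) x)
          = dtC n (dtC (n + 1) (ζt (n + 1 + 1) x)) := (hddC n (ζt (n + 1 + 1) x)).symm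
      have e2 : ∑ j, f j • dtC n (τ (n + 1) j x)
          = dtC n (dtC (n + 1) (ζt (n + 1 + 1) x)) - dtC n (ζt (n + 1) (dtD (n + 1) x)) := by
        rw [show ∑ j, f j • dtC n (τ (n + 1) j x) = dtC n (∑ j, f j • τ (n + 1) j x) from
          by rw [map_sum]; simp only [map_smul], ← hτ' (n + 1) x, map_sub]
      have e3 : ∑ j, f j • τ n j (dtD (n + 1) x)
          = dtC n (ζt (n + 1) (dtD (n + 1) x)) - ζt n (dtD n (dtD (n + 1) x)) :=
        (hτ' n (dtD (n + 1) x)).symm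
      have e4 : ∑ j, f j • ζt n (ttD j n x) = ζt n (dtD n (dtD (n + 1) x)) := by
        rw [show ∑ j, f j • ζt n (ttD j n x) = ζt n (∑ j, f j • ttD j n x) from
          by rw [map_sum]; simp only [map_smul], ← hddD n x]
      rw [e1, e2, e3, e4]
      abel
    have hbc := rq_koszul_baseChange (hDfree (n + 1 + 1)) (hDfin (n + 1 + 1))
      (hCfree n) hwreg _ hz k
    have h5 := LinearMap.congr_fun hbc y
    rw [LinearMap.baseChange_sub, LinearMap.baseChange_sub, LinearMap.baseChange_sub,
      LinearMap.baseChange_comp, LinearMap.baseChange_comp, LinearMap.baseChange_comp,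
      LinearMap.baseChange_comp, hζt, hζt] at h5
    simp only [LinearMap.sub_apply, LinearMap.comp_apply, LinearMap.zero_apply] at h5
    rw [sub_eq_zero] at h5
    exact eq_add_of_sub_eq h5
  -- `s_k ∘ ψ` is homotopic to `ψ ∘ t_k` (with explicit homotopy `σ`)
  have hR2ψ : ∀ (n : ℤ) (y : Rquot Q f ⊗[Q] Ct (n + 1 + 1)),
      (ttD k n).baseChange (Rquot Q f) (ψ (n + 1 + 1) y)
          - ψ n ((ttC k n).baseChange (Rquot Q f) y)
        = (dtD n).baseChange (Rquot Q f) ((σ (n + 1) k).baseChange (Rquot Q f) y)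
          + (σ n k).baseChange (Rquot Q f) ((dtC (n + 1)).baseChange (Rquot Q f) y) := by
    intro n y
    have hz : ∑ j, f j • (ttD j n ∘ₗ ψt (n + 1 + 1) - ψt n ∘ₗ ttC j n
        - σ n j ∘ₗ dtC (n + 1) - dtD n ∘ₗ σ (n + 1) j) = 0 := by
      ext x
      simp only [LinearMap.sum_apply, LinearMap.smul_apply, LinearMap.sub_apply,
        LinearMap.comp_apply, LinearMap.zero_apply, smul_sub, Finset.sum_sub_distrib]
      have e1 : ∑ j, f j • ttD j n (ψt (n + 1 + 1) x)
          = dtD n (dtD (n + 1) (ψt (n + 1 + 1) x)) := (hddD n (ψt (n + 1 + 1) x)).symm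
      have e2 : ∑ j, f j • dtD n (σ (n + 1) j x)
          = dtD n (dtD (n + 1) (ψt (n + 1 + 1) x)) - dtD n (ψt (n + 1) (dtC (n + 1) x)) := by
        rw [show ∑ j, f j • dtD n (σ (n + 1) j x) = dtD n (∑ j, f j • σ (n + 1) j x) from
          by rw [map_sum]; simp only [map_smul], ← hσ' (n + 1) x, map_sub]
      have e3 : ∑ j, f j • σ n j (dtC (n + 1) x)
          = dtD n (ψt (n + 1) (dtC (n + 1) x)) - ψt n (dtC n (dtC (n + 1) x)) :=
        (hσ' n (dtC (n + 1) x)).symm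
      have e4 : ∑ j, f j • ψt n (ttC j n x) = ψt n (dtC n (dtC (n + 1) x)) := by
        rw [show ∑ j, f j • ψt n (ttC j n x) = ψt n (∑ j, f j • ttC j n x) from
          by rw [map_sum]; simp only [map_smul], ← hddC n x]
      rw [e1, e2, e3, e4]
      abel
    have hbc := rq_koszul_baseChange (hCfree (n + 1 + 1)) (hCfin (n + 1 + 1))
      (hDfree n) hwreg _ hz k
    have h5 := LinearMap.congr_fun hbc y
    rw [LinearMap.baseChange_sub, LinearMap.baseChange_sub, LinearMap.baseChange_sub,
      LinearMap.baseChange_comp, LinearMap.baseChange_comp, LinearMap.baseChange_comp,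
      LinearMap.baseChange_comp, hψt, hψt] at h5
    simp only [LinearMap.sub_apply, LinearMap.comp_apply, LinearMap.zero_apply] at h5
    rw [sub_eq_zero] at h5
    exact eq_add_of_sub_eq h5
  constructor
  · -- the homotopy `lam` between `t_k` and `ζ ∘ s_k ∘ ψ`
    refine ⟨fun m => (τ m k).baseChange (Rquot Q f) ∘ₗ ψ (m + 1)
      - (ttC k m).baseChange (Rquot Q f) ∘ₗ G (m + 1), ?_⟩
    intro n x
    simp only [LinearMap.sub_apply, LinearMap.comp_apply, map_sub]
    have h2 := hR2ζ n (ψ (n + 1 + 1) x)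
    have h6 := congrArg ((τ n k).baseChange (Rquot Q f)) (hψ (n + 1) x)
    have h4 := congrArg ((ttC k n).baseChange (Rquot Q f)) (hG (n + 1) x)
    rw [map_sub, map_add] at h4
    have h78 := hR1C n (G (n + 1 + 1) x)
    have e2 := eq_sub_of_add_eq h2.symm
    have e4 := sub_eq_iff_eq_add.mp h4
    rw [e2, e4, h6, h78]
    abel
  · -- the homotopy `mu` between `s_k` and `ψ ∘ t_k ∘ ζ`
    refine ⟨fun m => (σ m k).baseChange (Rquot Q f) ∘ₗ ζ (m + 1)
      - (ttD k m).baseChange (Rquot Q f) ∘ₗ H (m + 1), ?_⟩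
    intro n x
    simp only [LinearMap.sub_apply, LinearMap.comp_apply, map_sub]
    have h2 := hR2ψ n (ζ (n + 1 + 1) x)
    have h6 := congrArg ((σ n k).baseChange (Rquot Q f)) (hζ (n + 1) x)
    have h4 := congrArg ((ttD k n).baseChange (Rquot Q f)) (hH (n + 1) x)
    rw [map_sub, map_add] at h4
    have h78 := hR1D n (H (n + 1 + 1) x)
    have e2 := eq_sub_of_add_eq h2.symm
    have e4 := sub_eq_iff_eq_add.mp h4
    rw [e2, e4, h6, h78]
    abel
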